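/- Let D be a PVMD, P a potent maximal t-ideal of D, J a P-ideal (a v-ideal of finite type contained only in the maximal t-ideal P), and Q a prime ideal of D contained in P with J ⊄ Q. Then Q ⊆ ⋂_{n≥1}(J^n)_v. -/

import Mathlib

open scoped nonZeroDivisors

variable (D : Type*) [CommRing D] [IsDomain D]
variable (K : Type*) [Field K] [Algebra D K] [IsFractionRing D K]

/-- The `v`-operation: `I_v = (I⁻¹)⁻¹`, viewed as a `D`-submodule of `K`. -/
noncomputable def vSub (I : FractionalIdeal D⁰ K) : Submodule D K :=
  (((I⁻¹)⁻¹ : FractionalIdeal D⁰ K) : Submodule D K)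

/-- The `t`-operation: `I_t = ⋃ {J_v : J ⊆ I nonzero finitely generated}`. -/
noncomputable def tSub (I : FractionalIdeal D⁰ K) : Submodule D K :=
  ⨆ J : {J : FractionalIdeal D⁰ K // J ≠ 0 ∧ (J : Submodule D K).FG ∧ J ≤ I}, vSub D K J.1

/-- A fractional ideal `I` is `t`-invertible if `(I * I⁻¹)_t = D`. -/
noncomputable def IsTInvertible (I : FractionalIdeal D⁰ K) : Prop :=
  tSub D K (I * I⁻¹) = ((1 : FractionalIdeal D⁰ K) : Submodule D K)

/-- An integral ideal `I` of `D` is a `t`-ideal if `I_t = I`. -/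
noncomputable def IsTIdeal (I : Ideal D) : Prop :=
  tSub D K (I : FractionalIdeal D⁰ K) = ((I : FractionalIdeal D⁰ K) : Submodule D K)

/-- `D` is a PVMD: every nonzero finitely generated integral ideal is `t`-invertible. -/
noncomputable def IsPVMD : Prop :=
  ∀ I : Ideal D, I ≠ ⊥ → I.FG → IsTInvertible D K (I : FractionalIdeal D⁰ K)

/-- `P` is a maximal `t`-ideal: a proper integral `t`-ideal maximal among such. -/
noncomputable def IsMaximalTIdeal (P : Ideal D) : Prop :=
  IsTIdeal D K P ∧ P ≠ ⊤ ∧ ∀ Q : Ideal D, IsTIdeal D K Q → Q ≠ ⊤ → P ≤ Q → P = Q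

/-- `I` is a rigid ideal contained in the maximal `t`-ideal `P` (a `P`-ideal):
a `v`-ideal of finite type contained in `P` and in no other maximal `t`-ideal. -/
noncomputable def IsPIdeal (P I : Ideal D) : Prop :=
  (∃ A : Ideal D, A ≠ ⊥ ∧ A.FG ∧
      ((I : FractionalIdeal D⁰ K) : Submodule D K) = vSub D K (A : FractionalIdeal D⁰ K)) ∧
    I ≤ P ∧ ∀ Q : Ideal D, IsMaximalTIdeal D K Q → I ≤ Q → Q = P


/-- `P` is potent: it contains a nonzero finitely generated ideal contained in no
other maximal `t`-ideal. -/
noncomputable def IsPotent (P : Ideal D) : Prop :=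
  ∃ A : Ideal D, A ≠ ⊥ ∧ A.FG ∧ A ≤ P ∧
    ∀ Q : Ideal D, IsMaximalTIdeal D K Q → A ≤ Q → Q = P

section Helpers

set_option linter.unusedSectionVars false

open FractionalIdeal

variable {D K}

lemma myInv_ne_zero {I : FractionalIdeal D⁰ K} (hI : I ≠ 0) : I⁻¹ ≠ 0 := by
  obtain ⟨a, haS, ha⟩ := I.isFractional
  have h1 : algebraMap D K a ∈ I⁻¹ := by
    rw [FractionalIdeal.mem_inv_iff hI]
    intro y hy
    obtain ⟨b, hb⟩ := ha y hy
    exact (FractionalIdeal.mem_one_iff _).mpr ⟨b, by rw [hb, Algebra.smul_def]⟩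
  intro h0
  rw [h0] at h1
  have : algebraMap D K a ≠ 0 := by
    simpa using (IsFractionRing.to_map_eq_zero_iff (K := K)).not.mpr
      (nonZeroDivisors.ne_zero haS)
  simp only [FractionalIdeal.mem_zero_iff] at h1
  exact this h1

lemma myInv_anti {I J : FractionalIdeal D⁰ K} (hI : I ≠ 0) (h : I ≤ J) : J⁻¹ ≤ I⁻¹ := by
  have hJ : J ≠ 0 := fun h0 => hI (le_antisymm (h0 ▸ h) (zero_le _))
  intro x hx
  replace hx : x ∈ J⁻¹ := hx
  show x ∈ I⁻¹
  rw [FractionalIdeal.mem_inv_iff hI]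
  intro y hy
  exact (FractionalIdeal.mem_inv_iff hJ).mp hx y (h hy)

lemma my_le_inv_inv {I : FractionalIdeal D⁰ K} (hI : I ≠ 0) : I ≤ (I⁻¹)⁻¹ := by
  intro x hx
  replace hx : x ∈ I := hx
  show x ∈ (I⁻¹)⁻¹
  rw [FractionalIdeal.mem_inv_iff (myInv_ne_zero hI)]
  intro y hy
  rw [mul_comm]
  exact (FractionalIdeal.mem_inv_iff hI).mp hy x hx

lemma myInv_inv_inv {I : FractionalIdeal D⁰ K} (hI : I ≠ 0) : ((I⁻¹)⁻¹)⁻¹ = I⁻¹ :=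
  le_antisymm (myInv_anti hI (my_le_inv_inv hI)) (my_le_inv_inv (myInv_ne_zero hI))

lemma le_vSub (I : FractionalIdeal D⁰ K) : (I : Submodule D K) ≤ vSub D K I := by
  by_cases hI : I = 0
  · simp [hI, vSub, FractionalIdeal.inv_zero']
  · exact (FractionalIdeal.coe_le_coe).mpr (my_le_inv_inv hI)

lemma vSub_mono {I J : FractionalIdeal D⁰ K} (h : I ≤ J) : vSub D K I ≤ vSub D K J := by
  by_cases hI : I = 0
  · simp [hI, vSub, FractionalIdeal.inv_zero']
  · have hJ : J ≠ 0 := fun h0 => hI (le_antisymm (h0 ▸ h) (zero_le _))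
    exact (FractionalIdeal.coe_le_coe).mpr
      (myInv_anti (myInv_ne_zero hJ) (myInv_anti hI h))

lemma mem_vSub_iff {I : FractionalIdeal D⁰ K} (hI : I ≠ 0) {x : K} :
    x ∈ vSub D K I ↔ ∀ y ∈ I⁻¹, x * y ∈ (1 : FractionalIdeal D⁰ K) := by
  rw [vSub, FractionalIdeal.mem_coe, FractionalIdeal.mem_inv_iff (myInv_ne_zero hI)]

lemma vSub_le_vSub_of_le_vSub {G H : FractionalIdeal D⁰ K} (hH : H ≠ 0)
    (h : (G : Submodule D K) ≤ vSub D K H) : vSub D K G ≤ vSub D K H := by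
  have h' : G ≤ (H⁻¹)⁻¹ := (FractionalIdeal.coe_le_coe).mpr h
  have h2 : vSub D K ((H⁻¹)⁻¹) = vSub D K H := by
    unfold vSub; rw [myInv_inv_inv hH]
  exact h2 ▸ vSub_mono h'

lemma fi_le_add_left {I J : FractionalIdeal D⁰ K} : I ≤ I + J := by
  rw [← FractionalIdeal.sup_eq_add]; exact le_sup_left

lemma fi_le_add_right {I J : FractionalIdeal D⁰ K} : J ≤ I + J := by
  rw [← FractionalIdeal.sup_eq_add]; exact le_sup_right

lemma exists_ne_zero_mem {I : FractionalIdeal D⁰ K} (hI : I ≠ 0) :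
    ∃ z : K, z ∈ I ∧ z ≠ 0 := by
  by_contra h
  push_neg at h
  apply hI
  rw [← FractionalIdeal.coeToSubmodule_eq_bot, eq_bot_iff]
  intro z hz
  have : z ∈ I := hz
  simp [h z this]

lemma vSub_le_tSub {G I : FractionalIdeal D⁰ K} (hG : G ≠ 0) (hfg : (G : Submodule D K).FG)
    (h : G ≤ I) : vSub D K G ≤ tSub D K I :=
  le_iSup (fun J : {J : FractionalIdeal D⁰ K // J ≠ 0 ∧ (J : Submodule D K).FG ∧ J ≤ I} =>
    vSub D K J.1) ⟨G, hG, hfg, h⟩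

lemma tSub_le_iff {I : FractionalIdeal D⁰ K} {X : Submodule D K} :
    tSub D K I ≤ X ↔ ∀ G : FractionalIdeal D⁰ K, G ≠ 0 → (G : Submodule D K).FG → G ≤ I →
      vSub D K G ≤ X := by
  rw [tSub, iSup_le_iff]
  exact ⟨fun h G h1 h2 h3 => h ⟨G, h1, h2, h3⟩, fun h J => h J.1 J.2.1 J.2.2.1 J.2.2.2⟩

lemma spanSingleton_fg (x : K) :
    ((FractionalIdeal.spanSingleton D⁰ x : FractionalIdeal D⁰ K) : Submodule D K).FG := by
  rw [FractionalIdeal.coe_spanSingleton]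
  exact Submodule.fg_span_singleton x

lemma le_tSub (I : FractionalIdeal D⁰ K) : (I : Submodule D K) ≤ tSub D K I := by
  intro x hx
  by_cases hx0 : x = 0
  · exact hx0 ▸ (tSub D K I).zero_mem
  · have hxI : x ∈ I := hx
    have hG0 : FractionalIdeal.spanSingleton D⁰ x ≠ 0 := by
      rw [Ne, FractionalIdeal.spanSingleton_eq_zero_iff]; exact hx0
    refine vSub_le_tSub hG0 (spanSingleton_fg x)
      (FractionalIdeal.spanSingleton_le_iff_mem.mpr hxI) (le_vSub _ ?_)
    rw [FractionalIdeal.coe_spanSingleton]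
    exact Submodule.mem_span_singleton_self x

lemma exists_fg_of_mem_tSub {I : FractionalIdeal D⁰ K} (hI : I ≠ 0) {x : K}
    (hx : x ∈ tSub D K I) :
    ∃ G : FractionalIdeal D⁰ K, G ≠ 0 ∧ (G : Submodule D K).FG ∧ G ≤ I ∧ x ∈ vSub D K G := by
  obtain ⟨z, hzI, hz0⟩ := exists_ne_zero_mem hI
  have hne : Nonempty {J : FractionalIdeal D⁰ K // J ≠ 0 ∧ (J : Submodule D K).FG ∧ J ≤ I} :=
    ⟨⟨FractionalIdeal.spanSingleton D⁰ z,
      by rw [Ne, FractionalIdeal.spanSingleton_eq_zero_iff]; exact hz0,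
      spanSingleton_fg z, FractionalIdeal.spanSingleton_le_iff_mem.mpr hzI⟩⟩
  have hdir : Directed (· ≤ ·)
      (fun J : {J : FractionalIdeal D⁰ K // J ≠ 0 ∧ (J : Submodule D K).FG ∧ J ≤ I} =>
        vSub D K J.1) := by
    rintro ⟨G1, hG1, hfg1, hle1⟩ ⟨G2, hG2, hfg2, hle2⟩
    refine ⟨⟨G1 + G2, ?_, ?_, ?_⟩, vSub_mono fi_le_add_left, vSub_mono fi_le_add_right⟩
    · exact fun h0 => hG1 (FractionalIdeal.le_zero_iff.mp (h0 ▸ fi_le_add_left))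
    · rw [FractionalIdeal.coe_add, Submodule.add_eq_sup]
      exact Submodule.FG.sup hfg1 hfg2
    · rw [← FractionalIdeal.sup_eq_add]
      exact sup_le hle1 hle2
  rw [tSub] at hx
  obtain ⟨⟨G, h1, h2, h3⟩, hxg⟩ := (Submodule.mem_iSup_of_directed _ hdir).mp hx
  exact ⟨G, h1, h2, h3, hxg⟩

lemma finset_sub_vSub {I : FractionalIdeal D⁰ K} (hI : I ≠ 0) (T : Finset K)
    (hT : (↑T : Set K) ⊆ (tSub D K I : Set K)) :
    ∃ H : FractionalIdeal D⁰ K, H ≠ 0 ∧ (H : Submodule D K).FG ∧ H ≤ I ∧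
      (↑T : Set K) ⊆ (vSub D K H : Set K) := by
  classical
  induction T using Finset.induction with
  | empty =>
    obtain ⟨z, hzI, hz0⟩ := exists_ne_zero_mem hI
    exact ⟨FractionalIdeal.spanSingleton D⁰ z,
      by rw [Ne, FractionalIdeal.spanSingleton_eq_zero_iff]; exact hz0,
      spanSingleton_fg z, FractionalIdeal.spanSingleton_le_iff_mem.mpr hzI, by simp⟩
  | @insert t T' hnot ih =>
    have hT' : (↑T' : Set K) ⊆ (tSub D K I : Set K) := by
      intro u hu; exact hT (by simp [hu])
    obtain ⟨H1, hH10, hH1fg, hH1I, hH1T⟩ := ih hT'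
    have htmem : t ∈ tSub D K I := hT (by simp)
    obtain ⟨G, hG0, hGfg, hGI, htG⟩ := exists_fg_of_mem_tSub hI htmem
    refine ⟨H1 + G, fun h0 => hH10 (FractionalIdeal.le_zero_iff.mp (h0 ▸ fi_le_add_left)), ?_, ?_, ?_⟩
    · rw [FractionalIdeal.coe_add, Submodule.add_eq_sup]
      exact Submodule.FG.sup hH1fg hGfg
    · rw [← FractionalIdeal.sup_eq_add]
      exact sup_le hH1I hGI
    · intro u hu
      rcases Finset.mem_insert.mp (by exact_mod_cast hu) with rfl | huT'
      · exact vSub_mono (fi_le_add_right : G ≤ H1 + G) htG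
      · exact vSub_mono (fi_le_add_left : H1 ≤ H1 + G) (hH1T huT')

lemma vSub_le_tSub_of_le {G I : FractionalIdeal D⁰ K} (hI : I ≠ 0)
    (hfg : (G : Submodule D K).FG) (h : (G : Submodule D K) ≤ tSub D K I) :
    vSub D K G ≤ tSub D K I := by
  obtain ⟨T, hT⟩ := hfg
  have hTsub : (↑T : Set K) ⊆ (tSub D K I : Set K) := by
    intro u hu
    exact h (hT ▸ Submodule.subset_span hu)
  obtain ⟨H, hH0, hHfg, hHI, hTH⟩ := finset_sub_vSub hI T hTsub
  have hGH : (G : Submodule D K) ≤ vSub D K H := by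
    rw [← hT]; exact Submodule.span_le.mpr hTH
  exact le_trans (vSub_le_vSub_of_le_vSub hH0 hGH) (vSub_le_tSub hH0 hHfg hHI)

lemma mul_mem_one {x y : K} (hx : x ∈ (1 : FractionalIdeal D⁰ K))
    (hy : y ∈ (1 : FractionalIdeal D⁰ K)) : x * y ∈ (1 : FractionalIdeal D⁰ K) := by
  obtain ⟨a, rfl⟩ := (FractionalIdeal.mem_one_iff _).mp hx
  obtain ⟨b, rfl⟩ := (FractionalIdeal.mem_one_iff _).mp hy
  exact (FractionalIdeal.mem_one_iff _).mpr ⟨a * b, map_mul _ _ _⟩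

lemma one_inv' : ((1 : FractionalIdeal D⁰ K))⁻¹ = 1 := by
  rw [FractionalIdeal.inv_eq, FractionalIdeal.div_one]

lemma vSub_le_one {G : FractionalIdeal D⁰ K} (hG : G ≤ 1) :
    vSub D K G ≤ ((1 : FractionalIdeal D⁰ K) : Submodule D K) := by
  by_cases h0 : G = 0
  · simp [h0, vSub, FractionalIdeal.inv_zero']
  · have h1 : (1 : FractionalIdeal D⁰ K) ≤ G⁻¹ := by
      intro x hx
      replace hx : x ∈ (1 : FractionalIdeal D⁰ K) := hx
      show x ∈ G⁻¹
      rw [FractionalIdeal.mem_inv_iff h0]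
      intro y hy
      exact mul_mem_one hx (hG hy)
    have h2 := myInv_anti (one_ne_zero' (FractionalIdeal D⁰ K)) h1
    rw [one_inv'] at h2
    exact FractionalIdeal.coe_le_coe.mpr h2

lemma tSub_le_one (I : Ideal D) :
    tSub D K (I : FractionalIdeal D⁰ K) ≤ ((1 : FractionalIdeal D⁰ K) : Submodule D K) :=
  tSub_le_iff.mpr fun _ _ _ hle =>
    vSub_le_one (le_trans hle FractionalIdeal.coeIdeal_le_one)

noncomputable def idl (N : Submodule D K) : Ideal D := N.comap (Algebra.linearMap D K)

lemma mem_idl_iff {N : Submodule D K} {d : D} :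
    d ∈ idl N ↔ algebraMap D K d ∈ N := Iff.rfl

lemma coeIdeal_idl {N : Submodule D K}
    (hN : N ≤ ((1 : FractionalIdeal D⁰ K) : Submodule D K)) :
    (((idl N : Ideal D) : FractionalIdeal D⁰ K) : Submodule D K) = N := by
  rw [FractionalIdeal.coe_coeIdeal]
  apply Submodule.map_comap_eq_self
  rwa [FractionalIdeal.coe_one, Submodule.one_eq_range] at hN

lemma algebraMap_mem_coeIdeal_iff {I : Ideal D} {d : D} :
    algebraMap D K d ∈ (I : FractionalIdeal D⁰ K) ↔ d ∈ I := by
  rw [FractionalIdeal.mem_coeIdeal]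
  constructor
  · rintro ⟨x, hx, he⟩
    exact (IsFractionRing.injective D K he) ▸ hx
  · exact fun h => ⟨d, h, rfl⟩

lemma coeIdealSub_mono {I J : Ideal D} (h : I ≤ J) :
    ((I : FractionalIdeal D⁰ K) : Submodule D K) ≤ ((J : FractionalIdeal D⁰ K) : Submodule D K) :=
  FractionalIdeal.coe_le_coe.mpr ((FractionalIdeal.coeIdeal_le_coeIdeal K).mpr h)

lemma isTIdeal_of_tSub_le {E : Ideal D}
    (hE : tSub D K (E : FractionalIdeal D⁰ K) ≤ ((E : FractionalIdeal D⁰ K) : Submodule D K)) :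
    IsTIdeal D K E := le_antisymm hE (le_tSub _)

lemma isTIdeal_idl_vSub {G : FractionalIdeal D⁰ K} (hG0 : G ≠ 0) (hG1 : G ≤ 1) :
    IsTIdeal D K (idl (vSub D K G)) := by
  have hcoe := coeIdeal_idl (vSub_le_one hG1)
  apply isTIdeal_of_tSub_le
  rw [hcoe]
  apply tSub_le_iff.mpr
  intro G' _ _ hG'le
  exact vSub_le_vSub_of_le_vSub hG0 (le_trans (FractionalIdeal.coe_le_coe.mpr hG'le) hcoe.le)

lemma isTIdeal_idl_tSub {I : Ideal D} (hI : I ≠ ⊥) :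
    IsTIdeal D K (idl (tSub D K (I : FractionalIdeal D⁰ K))) := by
  have hcoe := coeIdeal_idl (tSub_le_one (K := K) I)
  apply isTIdeal_of_tSub_le
  rw [hcoe]
  apply tSub_le_iff.mpr
  intro G' _ hG'fg hG'le
  exact vSub_le_tSub_of_le (FractionalIdeal.coeIdeal_ne_zero.mpr hI) hG'fg
    (le_trans (FractionalIdeal.coe_le_coe.mpr hG'le) hcoe.le)

lemma maxT_isPrime {M : Ideal D} (hM : IsMaximalTIdeal D K M) : M.IsPrime := by
  refine ⟨hM.2.1, ?_⟩
  intro a b hab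
  by_contra hcon
  push_neg at hcon
  obtain ⟨ha, hb⟩ := hcon
  have key : ∀ x : D, x ∉ M →
      (1 : K) ∈ tSub D K ((M ⊔ Ideal.span {x} : Ideal D) : FractionalIdeal D⁰ K) := by
    intro x hx
    set Mx := M ⊔ Ideal.span {x} with hMxdef
    have hxMx : x ∈ Mx := (le_sup_right : Ideal.span {x} ≤ M ⊔ Ideal.span {x}) (Ideal.mem_span_singleton_self x)
    have hMxne : Mx ≠ ⊥ := by
      intro h0
      have hxbot : x ∈ (⊥ : Ideal D) := h0 ▸ hxMx
      have hx0 : x = 0 := by simpa using hxbot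
      exact hx (hx0 ▸ M.zero_mem)
    set E := idl (tSub D K (Mx : FractionalIdeal D⁰ K)) with hEdef
    have hEt : IsTIdeal D K E := isTIdeal_idl_tSub hMxne
    have hME : M ≤ E := by
      intro m hm
      exact le_tSub _ (algebraMap_mem_coeIdeal_iff.mpr ((le_sup_left : M ≤ Mx) hm))
    have hxE : x ∈ E := le_tSub _ (algebraMap_mem_coeIdeal_iff.mpr hxMx)
    have hEtop : E = ⊤ := by
      by_contra hEtop
      exact hx ((hM.2.2 E hEt hEtop hME) ▸ hxE)
    have h1 : (1 : D) ∈ E := hEtop ▸ Submodule.mem_top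
    simpa using (mem_idl_iff.mp h1)
  have h1a := key a ha
  have h1b := key b hb
  have hMa0 : ((M ⊔ Ideal.span {a} : Ideal D) : FractionalIdeal D⁰ K) ≠ 0 := by
    rw [FractionalIdeal.coeIdeal_ne_zero]
    intro h0
    have : a ∈ (⊥ : Ideal D) := h0 ▸ ((le_sup_right : Ideal.span {a} ≤ M ⊔ Ideal.span {a}) (Ideal.mem_span_singleton_self a))
    exact ha (by simpa using this ▸ M.zero_mem)
  have hMb0 : ((M ⊔ Ideal.span {b} : Ideal D) : FractionalIdeal D⁰ K) ≠ 0 := by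
    rw [FractionalIdeal.coeIdeal_ne_zero]
    intro h0
    have : b ∈ (⊥ : Ideal D) := h0 ▸ ((le_sup_right : Ideal.span {b} ≤ M ⊔ Ideal.span {b}) (Ideal.mem_span_singleton_self b))
    exact hb (by simpa using this ▸ M.zero_mem)
  obtain ⟨Ga, hGa0, hGafg, hGale, h1Ga⟩ := exists_fg_of_mem_tSub hMa0 h1a
  obtain ⟨Gb, hGb0, hGbfg, hGble, h1Gb⟩ := exists_fg_of_mem_tSub hMb0 h1b
  have hGab0 : Ga * Gb ≠ 0 := by
    obtain ⟨za, hza, hza0⟩ := exists_ne_zero_mem hGa0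
    obtain ⟨zb, hzb, hzb0⟩ := exists_ne_zero_mem hGb0
    intro h0
    have hmem : za * zb ∈ Ga * Gb := FractionalIdeal.mul_mem_mul hza hzb
    rw [h0] at hmem
    exact (mul_ne_zero hza0 hzb0) (by simpa [FractionalIdeal.mem_zero_iff] using hmem)
  have hfgab : ((Ga * Gb : FractionalIdeal D⁰ K) : Submodule D K).FG := by
    rw [FractionalIdeal.coe_mul]
    exact Submodule.FG.mul hGafg hGbfg
  have hprod : Ga * Gb ≤ (M : FractionalIdeal D⁰ K) := by
    have h2 : (M ⊔ Ideal.span {a}) * (M ⊔ Ideal.span {b}) ≤ M := by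
      rw [Ideal.mul_le]
      intro r hr s hs
      obtain ⟨m1, hm1, c1, hc1, rfl⟩ := Submodule.mem_sup.mp hr
      obtain ⟨m2, hm2, c2, hc2, rfl⟩ := Submodule.mem_sup.mp hs
      obtain ⟨t1, ht1⟩ := Ideal.mem_span_singleton'.mp hc1
      obtain ⟨t2, ht2⟩ := Ideal.mem_span_singleton'.mp hc2
      have hexp : (m1 + c1) * (m2 + c2) = m1 * (m2 + c2) + c1 * m2 + (t1 * t2) * (a * b) := by
        rw [← ht1, ← ht2]; ring
      rw [hexp]
      exact M.add_mem (M.add_mem (M.mul_mem_right _ hm1) (M.mul_mem_left c1 hm2))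
        (M.mul_mem_left _ hab)
    calc Ga * Gb ≤ ((M ⊔ Ideal.span {a} : Ideal D) : FractionalIdeal D⁰ K) *
          ((M ⊔ Ideal.span {b} : Ideal D) : FractionalIdeal D⁰ K) :=
        FractionalIdeal.mul_le.mpr fun xa hxa xb hxb =>
          FractionalIdeal.mul_mem_mul (hGale hxa) (hGble hxb)
      _ = (((M ⊔ Ideal.span {a}) * (M ⊔ Ideal.span {b}) : Ideal D) : FractionalIdeal D⁰ K) :=
        (FractionalIdeal.coeIdeal_mul _ _).symm
      _ ≤ (M : FractionalIdeal D⁰ K) := (FractionalIdeal.coeIdeal_le_coeIdeal K).mpr h2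
  have h1ab : (1 : K) ∈ vSub D K (Ga * Gb) := by
    rw [mem_vSub_iff hGab0]
    intro y hy
    rw [one_mul]
    have hyGa : y ∈ Ga⁻¹ := by
      rw [FractionalIdeal.mem_inv_iff hGa0]
      intro g hg
      have hyg : y * g ∈ Gb⁻¹ := by
        rw [FractionalIdeal.mem_inv_iff hGb0]
        intro g' hg'
        rw [mul_assoc]
        exact (FractionalIdeal.mem_inv_iff hGab0).mp hy (g * g')
          (FractionalIdeal.mul_mem_mul hg hg')
      have := (mem_vSub_iff hGb0).mp h1Gb (y * g) hyg
      rwa [one_mul] at this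
    have := (mem_vSub_iff hGa0).mp h1Ga y hyGa
    rwa [one_mul] at this
  have hfin : (1 : K) ∈ tSub D K (M : FractionalIdeal D⁰ K) :=
    vSub_le_tSub hGab0 hfgab hprod h1ab
  rw [hM.1] at hfin
  have h1M : (1 : D) ∈ M := by
    have : algebraMap D K 1 ∈ (M : FractionalIdeal D⁰ K) := by
      simpa using (show (1:K) ∈ (M : FractionalIdeal D⁰ K) from hfin)
    exact algebraMap_mem_coeIdeal_iff.mp this
  exact hM.2.1 ((Ideal.eq_top_iff_one M).mpr h1M)

lemma finset_common_chain {c : Set (Ideal D)} (hchain : IsChain (· ≤ ·) c) {y : Ideal D}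
    (hy : y ∈ c) (T : Finset K)
    (hTmem : ∀ t ∈ T, ∃ C' ∈ c, t ∈ ((C' : FractionalIdeal D⁰ K) : Submodule D K)) :
    ∃ C' ∈ c, ∀ t ∈ T, t ∈ ((C' : FractionalIdeal D⁰ K) : Submodule D K) := by
  classical
  induction T using Finset.induction with
  | empty => exact ⟨y, hy, by simp⟩
  | @insert t T' hnot ih =>
    obtain ⟨C1, hC1, hC1T⟩ := ih (fun u hu => hTmem u (Finset.mem_insert_of_mem hu))
    obtain ⟨C2, hC2, hC2t⟩ := hTmem t (Finset.mem_insert_self t T')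
    rcases hchain.total hC1 hC2 with h | h
    · refine ⟨C2, hC2, fun u hu => ?_⟩
      rcases Finset.mem_insert.mp hu with rfl | hu'
      · exact hC2t
      · exact coeIdealSub_mono h (hC1T u hu')
    · refine ⟨C1, hC1, fun u hu => ?_⟩
      rcases Finset.mem_insert.mp hu with rfl | hu'
      · exact coeIdealSub_mono h hC2t
      · exact hC1T u hu'

lemma exists_maximalTIdeal_ge {C : Ideal D} (hCt : IsTIdeal D K C) (hC : C ≠ ⊤) :
    ∃ M : Ideal D, C ≤ M ∧ IsMaximalTIdeal D K M := by
  have hbound : ∀ c ⊆ {I : Ideal D | IsTIdeal D K I ∧ I ≠ ⊤}, IsChain (· ≤ ·) c →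
      ∀ y ∈ c, ∃ ub ∈ {I : Ideal D | IsTIdeal D K I ∧ I ≠ ⊤}, ∀ z ∈ c, z ≤ ub := by
    intro c hcs hchain y hy
    have hdirOn : DirectedOn (· ≤ ·) c := hchain.directedOn
    refine ⟨sSup c, ⟨?_, ?_⟩, fun z hz => le_sSup hz⟩
    · apply isTIdeal_of_tSub_le
      apply tSub_le_iff.mpr
      intro G hG0 hGfg hGle
      obtain ⟨T, hT⟩ := hGfg
      have hTmem : ∀ t ∈ T, ∃ C' ∈ c, t ∈ ((C' : FractionalIdeal D⁰ K) : Submodule D K) := by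
        intro t ht
        have htG : t ∈ (G : Submodule D K) := hT ▸ Submodule.subset_span ht
        have htmem : t ∈ ((sSup c : Ideal D) : FractionalIdeal D⁰ K) := hGle htG
        obtain ⟨d, hd, rfl⟩ := (FractionalIdeal.mem_coeIdeal _).mp htmem
        obtain ⟨C', hC'c, hdC'⟩ := (Submodule.mem_sSup_of_directed ⟨y, hy⟩ hdirOn).mp hd
        exact ⟨C', hC'c, algebraMap_mem_coeIdeal_iff.mpr hdC'⟩
      obtain ⟨C', hC'c, hC'T⟩ := finset_common_chain hchain hy T hTmem
      have hGC' : G ≤ (C' : FractionalIdeal D⁰ K) := by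
        rw [← FractionalIdeal.coe_le_coe, ← hT]
        exact Submodule.span_le.mpr hC'T
      calc vSub D K G ≤ tSub D K (C' : FractionalIdeal D⁰ K) :=
            vSub_le_tSub hG0 (hT ▸ Submodule.fg_span (Finset.finite_toSet T)) hGC'
        _ = ((C' : FractionalIdeal D⁰ K) : Submodule D K) := (hcs hC'c).1
        _ ≤ (((sSup c : Ideal D) : FractionalIdeal D⁰ K) : Submodule D K) :=
            coeIdealSub_mono (le_sSup hC'c)
    · intro htop
      have h1 : (1 : D) ∈ sSup c := htop ▸ Submodule.mem_top
      obtain ⟨C', hC'c, h1C'⟩ := (Submodule.mem_sSup_of_directed ⟨y, hy⟩ hdirOn).mp h1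
      exact (hcs hC'c).2 ((Ideal.eq_top_iff_one C').mpr h1C')
  obtain ⟨M, hCM, hMmax⟩ :=
    zorn_le_nonempty₀ {I : Ideal D | IsTIdeal D K I ∧ I ≠ ⊤} hbound C ⟨hCt, hC⟩
  exact ⟨M, hCM, hMmax.1.1, hMmax.1.2,
    fun Q hQt hQtop hle => le_antisymm hle (hMmax.2 ⟨hQt, hQtop⟩ hle)⟩

lemma star_lemma (hD : IsPVMD D K) {P : Ideal D} (hP : IsMaximalTIdeal D K P)
    (x z : D) (hx : x ≠ 0) :
    ∃ s : D, s ∉ P ∧ (s * z ∈ Ideal.span {x} ∨ s * x ∈ Ideal.span {z}) := by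
  set F : Ideal D := Ideal.span {x, z} with hF
  have hxF : x ∈ F := Ideal.subset_span (by simp)
  have hzF : z ∈ F := Ideal.subset_span (by simp)
  have hF0 : F ≠ ⊥ := by
    intro h0
    have : x ∈ (⊥ : Ideal D) := h0 ▸ hxF
    exact hx (by simpa using this)
  have hFfg : F.FG := by
    classical
    exact ⟨insert x ({z} : Finset D), by simp [hF]⟩
  have hti := hD F hF0 hFfg
  have hFI0 : (F : FractionalIdeal D⁰ K) ≠ 0 := FractionalIdeal.coeIdeal_ne_zero.mpr hF0
  have hnotle : ¬ ((F : FractionalIdeal D⁰ K) * (F : FractionalIdeal D⁰ K)⁻¹ ≤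
      (P : FractionalIdeal D⁰ K)) := by
    intro hle
    have h1 : tSub D K ((F : FractionalIdeal D⁰ K) * (F : FractionalIdeal D⁰ K)⁻¹) ≤
        ((P : FractionalIdeal D⁰ K) : Submodule D K) := by
      apply tSub_le_iff.mpr
      intro G hG0 hGfg hGle
      have h2 : vSub D K G ≤ tSub D K (P : FractionalIdeal D⁰ K) :=
        vSub_le_tSub hG0 hGfg (le_trans hGle hle)
      rwa [hP.1] at h2
    rw [hti] at h1
    have h1mem : (1 : K) ∈ ((P : FractionalIdeal D⁰ K) : Submodule D K) :=
      h1 (FractionalIdeal.one_mem_one _)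
    have h1P : (1 : D) ∈ P := (algebraMap_mem_coeIdeal_iff (K := K)).mp (by simpa using h1mem)
    exact hP.2.1 ((Ideal.eq_top_iff_one P).mpr h1P)
  obtain ⟨u, huF, huP⟩ := SetLike.not_le_iff_exists.mp hnotle
  have hFdec : (F : FractionalIdeal D⁰ K) =
      FractionalIdeal.spanSingleton D⁰ (algebraMap D K x) +
      FractionalIdeal.spanSingleton D⁰ (algebraMap D K z) := by
    rw [hF, show ({x, z} : Set D) = insert x {z} from rfl, Ideal.span_insert,
      FractionalIdeal.coeIdeal_sup, FractionalIdeal.coeIdeal_span_singleton,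
      FractionalIdeal.coeIdeal_span_singleton]
  rw [hFdec, add_mul] at huF
  obtain ⟨v, hv, w, hw, huvw⟩ := (FractionalIdeal.mem_add _ _ _).mp huF
  obtain ⟨g, hg, hvg⟩ := FractionalIdeal.mem_singleton_mul.mp hv
  obtain ⟨g', hg', hwg⟩ := FractionalIdeal.mem_singleton_mul.mp hw
  rw [← hFdec] at hg hg'
  have hxg : algebraMap D K x * g ∈ (1 : FractionalIdeal D⁰ K) := by
    rw [mul_comm]
    exact (FractionalIdeal.mem_inv_iff hFI0).mp hg _ (algebraMap_mem_coeIdeal_iff.mpr hxF)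
  have hzg : algebraMap D K z * g' ∈ (1 : FractionalIdeal D⁰ K) := by
    rw [mul_comm]
    exact (FractionalIdeal.mem_inv_iff hFI0).mp hg' _ (algebraMap_mem_coeIdeal_iff.mpr hzF)
  obtain ⟨sa, hsa⟩ := (FractionalIdeal.mem_one_iff _).mp hxg
  obtain ⟨sb, hsb⟩ := (FractionalIdeal.mem_one_iff _).mp hzg
  have hsum : algebraMap D K (sa + sb) = u := by
    rw [RingHom.map_add, hsa, hsb, ← hvg, ← hwg, huvw]
  have hsumP : sa + sb ∉ P := by
    intro hmem
    exact huP (hsum ▸ algebraMap_mem_coeIdeal_iff.mpr hmem)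
  have hcases : sa ∉ P ∨ sb ∉ P := by
    by_contra hcon
    push_neg at hcon
    exact hsumP (P.add_mem hcon.1 hcon.2)
  rcases hcases with hsa' | hsb'
  · refine ⟨sa, hsa', Or.inl ?_⟩
    have hgz : g * algebraMap D K z ∈ (1 : FractionalIdeal D⁰ K) :=
      (FractionalIdeal.mem_inv_iff hFI0).mp hg _ (algebraMap_mem_coeIdeal_iff.mpr hzF)
    obtain ⟨c, hcc⟩ := (FractionalIdeal.mem_one_iff _).mp hgz
    have heq : algebraMap D K (sa * z) = algebraMap D K (x * c) := by
      rw [_root_.map_mul, _root_.map_mul, hsa, hcc]; ring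
    have : sa * z = x * c := IsFractionRing.injective D K heq
    exact Ideal.mem_span_singleton'.mpr ⟨c, by rw [mul_comm] at this ⊢; rw [← this]; ring⟩
  · refine ⟨sb, hsb', Or.inr ?_⟩
    have hgx : g' * algebraMap D K x ∈ (1 : FractionalIdeal D⁰ K) :=
      (FractionalIdeal.mem_inv_iff hFI0).mp hg' _ (algebraMap_mem_coeIdeal_iff.mpr hxF)
    obtain ⟨c, hcc⟩ := (FractionalIdeal.mem_one_iff _).mp hgx
    have heq : algebraMap D K (sb * x) = algebraMap D K (z * c) := by
      rw [_root_.map_mul, _root_.map_mul, hsb, hcc]; ring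
    have : sb * x = z * c := IsFractionRing.injective D K heq
    exact Ideal.mem_span_singleton'.mpr ⟨c, by rw [this]; ring⟩

end Helpers

/-- Let `D` be a PVMD, `P` a potent maximal `t`-ideal, `J` a `P`-ideal, and `Q` a prime
ideal of `D` contained in `P` with `J ⊄ Q`. Then `Q ⊆ ⋂_{n ≥ 1} (J^n)_v`. -/
theorem stmt_13 (hD : IsPVMD D K) (P : Ideal D) (hP : IsMaximalTIdeal D K P)
    (hpot : IsPotent D K P) (J : Ideal D) (hJ : IsPIdeal D K P J)
    (Q : Ideal D) (hQ : Q.IsPrime) (hQP : Q ≤ P) (hJQ : ¬ J ≤ Q) :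
    ((Q : FractionalIdeal D⁰ K) : Submodule D K) ≤
      ⨅ (n : ℕ) (_ : 1 ≤ n), vSub D K ((J : FractionalIdeal D⁰ K) ^ n) := by
  obtain ⟨A, hA0, hAfg, hJA⟩ := hJ.1
  obtain ⟨j, hjJ, hjQ⟩ := SetLike.not_le_iff_exists.mp hJQ
  have hj0 : j ≠ 0 := fun h => hjQ (h ▸ Q.zero_mem)
  have hAle : A ≤ J := by
    have h1 : ((A : FractionalIdeal D⁰ K) : Submodule D K) ≤
        ((J : FractionalIdeal D⁰ K) : Submodule D K) := by
      rw [hJA]; exact le_vSub _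
    exact (FractionalIdeal.coeIdeal_le_coeIdeal K).mp (FractionalIdeal.coe_le_coe.mp h1)
  refine le_iInf fun n => le_iInf fun hn => ?_
  intro xq hxq
  have hxq' : xq ∈ (Q : FractionalIdeal D⁰ K) := hxq
  obtain ⟨q, hqQ, rfl⟩ := (FractionalIdeal.mem_coeIdeal _).mp hxq'
  have hJbot : J ≠ ⊥ := fun h0 => hj0 (by simpa using (h0 ▸ hjJ : j ∈ (⊥ : Ideal D)))
  have hJn0 : ((J : FractionalIdeal D⁰ K)) ^ n ≠ 0 := by
    rw [← FractionalIdeal.coeIdeal_pow, Ne, FractionalIdeal.coeIdeal_eq_zero]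
    intro h0
    exact pow_ne_zero n hj0 (by simpa using (h0 ▸ Ideal.pow_mem_pow hjJ n : j ^ n ∈ (⊥ : Ideal D)))
  rw [mem_vSub_iff hJn0]
  intro y hy
  obtain ⟨s, hsP, hcase⟩ := star_lemma hD hP (j ^ n) q (pow_ne_zero n hj0)
  have hsq : ∃ c : D, s * q = j ^ n * c := by
    rcases hcase with h | h
    · obtain ⟨c, hc⟩ := Ideal.mem_span_singleton'.mp h
      exact ⟨c, by rw [← hc]; ring⟩
    · exfalso
      have hmem : s * (j ^ n) ∈ Q :=
        (Ideal.span_le.mpr (Set.singleton_subset_iff.mpr hqQ)) h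
      rcases hQ.mem_or_mem hmem with hs | hjn
      · exact hsP (hQP hs)
      · exact hjQ (hQ.mem_of_pow_mem n hjn)
  obtain ⟨c, hc⟩ := hsq
  set G : Ideal D := A ^ n ⊔ Ideal.span {s} with hGdef
  have hsG : s ∈ G := (le_sup_right : Ideal.span {s} ≤ G) (Ideal.mem_span_singleton_self s)
  have hs0 : s ≠ 0 := fun h => hsP (h ▸ P.zero_mem)
  have hG0 : G ≠ ⊥ := fun h0 => hs0 (by simpa using (h0 ▸ hsG : s ∈ (⊥ : Ideal D)))
  have hGfg : G.FG := Submodule.FG.sup (Submodule.FG.pow hAfg n) (Submodule.fg_span_singleton s)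
  have hGIc0 : (G : FractionalIdeal D⁰ K) ≠ 0 := FractionalIdeal.coeIdeal_ne_zero.mpr hG0
  have hymul : ∀ w ∈ ((J : FractionalIdeal D⁰ K)) ^ n, y * w ∈ (1 : FractionalIdeal D⁰ K) :=
    fun w hw => (FractionalIdeal.mem_inv_iff hJn0).mp hy w hw
  have hJnmem : ∀ d ∈ (J ^ n : Ideal D),
      algebraMap D K d ∈ ((J : FractionalIdeal D⁰ K)) ^ n := by
    intro d hd
    rw [← FractionalIdeal.coeIdeal_pow]
    exact algebraMap_mem_coeIdeal_iff.mpr hd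
  have hclaim : ∀ g ∈ G, algebraMap D K g * (algebraMap D K q * y) ∈
      (1 : FractionalIdeal D⁰ K) := by
    intro g hg
    obtain ⟨g1, hg1, g2, hg2, rfl⟩ := Submodule.mem_sup.mp hg
    obtain ⟨t, ht⟩ := Ideal.mem_span_singleton'.mp hg2
    rw [RingHom.map_add, add_mul]
    have hsum1 : algebraMap D K g1 * (algebraMap D K q * y) ∈ (1 : FractionalIdeal D⁰ K) := by
      have hg1' : g1 ∈ (J ^ n : Ideal D) := Ideal.pow_right_mono hAle n hg1
      have h1 : y * algebraMap D K g1 ∈ (1 : FractionalIdeal D⁰ K) :=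
        hymul _ (hJnmem _ hg1')
      have heq : algebraMap D K g1 * (algebraMap D K q * y) =
          algebraMap D K q * (y * algebraMap D K g1) := by ring
      rw [heq]
      exact mul_mem_one ((FractionalIdeal.mem_one_iff _).mpr ⟨q, rfl⟩) h1
    have hsum2 : algebraMap D K g2 * (algebraMap D K q * y) ∈ (1 : FractionalIdeal D⁰ K) := by
      have h1 : y * algebraMap D K (j ^ n) ∈ (1 : FractionalIdeal D⁰ K) :=
        hymul _ (hJnmem _ (Ideal.pow_mem_pow hjJ n))
      have heq : algebraMap D K g2 * (algebraMap D K q * y) =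
          algebraMap D K t * (algebraMap D K c * (y * algebraMap D K (j ^ n))) := by
        rw [← ht, _root_.map_mul]
        have h2 : algebraMap D K s * algebraMap D K q =
            algebraMap D K (j ^ n) * algebraMap D K c := by
          rw [← _root_.map_mul, ← _root_.map_mul, hc]
        calc algebraMap D K t * algebraMap D K s * (algebraMap D K q * y)
            = algebraMap D K t * ((algebraMap D K s * algebraMap D K q) * y) := by ring
          _ = algebraMap D K t * ((algebraMap D K (j ^ n) * algebraMap D K c) * y) := by
              rw [h2]
          _ = algebraMap D K t * (algebraMap D K c * (y * algebraMap D K (j ^ n))) := by ring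
      rw [heq]
      exact mul_mem_one ((FractionalIdeal.mem_one_iff _).mpr ⟨t, rfl⟩)
        (mul_mem_one ((FractionalIdeal.mem_one_iff _).mpr ⟨c, rfl⟩) h1)
    obtain ⟨d1, hd1⟩ := (FractionalIdeal.mem_one_iff _).mp hsum1
    obtain ⟨d2, hd2⟩ := (FractionalIdeal.mem_one_iff _).mp hsum2
    exact (FractionalIdeal.mem_one_iff _).mpr ⟨d1 + d2, by rw [RingHom.map_add, hd1, hd2]⟩
  have hqy : algebraMap D K q * y ∈ ((G : FractionalIdeal D⁰ K))⁻¹ := by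
    rw [FractionalIdeal.mem_inv_iff hGIc0]
    intro w hw
    obtain ⟨g, hg, rfl⟩ := (FractionalIdeal.mem_coeIdeal _).mp hw
    rw [mul_comm]
    exact hclaim g hg
  have hEt : IsTIdeal D K (idl (vSub D K (G : FractionalIdeal D⁰ K))) :=
    isTIdeal_idl_vSub hGIc0 FractionalIdeal.coeIdeal_le_one
  set E := idl (vSub D K (G : FractionalIdeal D⁰ K)) with hEdef
  have hGE : G ≤ E := fun g hg =>
    mem_idl_iff.mpr ((le_vSub _) (algebraMap_mem_coeIdeal_iff.mpr hg))
  have hEtop : E = ⊤ := by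
    by_contra hEne
    obtain ⟨M, hEM, hMmax⟩ := exists_maximalTIdeal_ge hEt hEne
    have hMprime := maxT_isPrime hMmax
    have hAnM : A ^ n ≤ M := le_trans (le_trans le_sup_left hGE) hEM
    have hAM : A ≤ M := fun a ha =>
      hMprime.mem_of_pow_mem n (hAnM (Ideal.pow_mem_pow ha n))
    have hJM : J ≤ M := by
      have hAfgK : ((A : FractionalIdeal D⁰ K) : Submodule D K).FG := by
        rw [FractionalIdeal.coe_coeIdeal]
        exact Submodule.FG.map _ hAfg
      have h1 : ((J : FractionalIdeal D⁰ K) : Submodule D K) ≤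
          ((M : FractionalIdeal D⁰ K) : Submodule D K) := by
        rw [hJA, ← hMmax.1]
        exact vSub_le_tSub (FractionalIdeal.coeIdeal_ne_zero.mpr hA0) hAfgK
          ((FractionalIdeal.coeIdeal_le_coeIdeal K).mpr hAM)
      exact (FractionalIdeal.coeIdeal_le_coeIdeal K).mp (FractionalIdeal.coe_le_coe.mp h1)
    have hMP : M = P := hJ.2.2 M hMmax hJM
    exact hsP (hMP ▸ (hEM (hGE hsG)))
  have h1v : (1 : K) ∈ vSub D K (G : FractionalIdeal D⁰ K) := by
    have h1E : (1 : D) ∈ E := hEtop ▸ Submodule.mem_top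
    simpa using (mem_idl_iff.mp h1E)
  have hfin := (mem_vSub_iff hGIc0).mp h1v _ hqy
  rwa [one_mul] at hfin
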